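/- Abstract structure theorem (Theorem 2 of the paper, module-theoretic core): Let p be a prime, H = ⟨σ⟩ cyclic of order p, M an 𝔽_p[H]-module, A an 𝔽_p-vector space, c: M → A surjective 𝔽_p-linear, r: A → M 𝔽_p-linear, with r∘c = (σ−1)^{p−1} on M, c(σm) = c(m) for all m, ker c = (σ−1)M, and suppose there is a trivial 𝔽_p[H]-submodule X of M such that c restricts to an isomorphism X ≅ ker r. Then M = X ⊕ Y as 𝔽_p[H]-modules, where Y is a (maximal) free 𝔽_p[H]-submodule of M, dim_{𝔽_p} X = dim_{𝔽_p} ker r, and rank_{𝔽_p[H]} Y = dim_{𝔽_p} (A / ker r) (when these are finite, dim_{𝔽_p} M = dim ker r + p·dim(A/ker r)). -/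

import Mathlib

/-- The group algebra `𝔽_p[H]` for `H` the cyclic group of order `p`, generated by `σ`. -/
abbrev Sp (p : ℕ) : Type := MonoidAlgebra (ZMod p) (Multiplicative (ZMod p))

/-- The generator `σ` of the cyclic group `H`, as an element of the group algebra. -/
noncomputable def sigma (p : ℕ) : Sp p :=
  MonoidAlgebra.of (ZMod p) (Multiplicative (ZMod p)) (Multiplicative.ofAdd 1)

/-- Scalar multiplication by `s ∈ 𝔽_p[H]` as an `𝔽_p`-linear endomorphism. -/
noncomputable def smulMap (p : ℕ) (M : Type*) [AddCommGroup M] [Module (Sp p) M]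
    [Module (ZMod p) M] [IsScalarTower (ZMod p) (Sp p) M] (s : Sp p) :
    M →ₗ[ZMod p] M :=
  (LinearMap.lsmul (Sp p) M s).restrictScalars (ZMod p)
universe u

variable (p : ℕ) [Fact p.Prime]

lemma sigma_pow_p : sigma p ^ p = 1 := by
  rw [sigma, ← map_pow]
  have : (Multiplicative.ofAdd (1 : ZMod p)) ^ p = 1 := by
    rw [← ofAdd_nsmul]; simp [ZMod.natCast_self]
  rw [this, map_one]

lemma t_pow_p : (sigma p - 1) ^ p = 0 := by
  have h1 : (p : ℕ).Prime := Fact.out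
  have hc : CharP (Sp p) p := charP_of_injective_algebraMap' (A := Sp p) (ZMod p) p
  have : ExpChar (Sp p) p := ExpChar.prime h1
  rw [sub_pow_char, sigma_pow_p, one_pow, sub_self]

lemma sigma_pow_val (g : Multiplicative (ZMod p)) :
    sigma p ^ (g.toAdd).val = MonoidAlgebra.of (ZMod p) (Multiplicative (ZMod p)) g := by
  rw [sigma, ← map_pow]
  congr 1
  rw [← ofAdd_nsmul]
  simp [ZMod.natCast_val]

lemma span_top : ⊤ ≤ Submodule.span (ZMod p)
    (Set.range fun j : Fin p => (sigma p - 1) ^ (j : ℕ)) := by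
  rw [← (MonoidAlgebra.basis _ _ :
      Module.Basis (Multiplicative (ZMod p)) (ZMod p) (Sp p)).span_eq]
  apply Submodule.span_le.2
  rintro _ ⟨g, rfl⟩
  have hb : (MonoidAlgebra.basis _ _ :
      Module.Basis (Multiplicative (ZMod p)) (ZMod p) (Sp p)) g
      = MonoidAlgebra.of (ZMod p) (Multiplicative (ZMod p)) g := by
    simp [MonoidAlgebra.of_apply]
  rw [hb, ← sigma_pow_val]
  set n := (g.toAdd).val with hn
  have heq : sigma p ^ n = ∑ k ∈ Finset.range (n+1),
      (sigma p - 1) ^ k * 1 ^ (n - k) * (n.choose k : Sp p) := by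
    rw [← add_pow]; ring_nf
  rw [heq]
  apply Submodule.sum_mem
  intro k hk
  simp only [Finset.mem_range, Nat.lt_succ_iff] at hk
  have hkp : k < p := lt_of_le_of_lt hk ((g.toAdd).val_lt)
  rw [one_pow, mul_one]
  have h2 : (sigma p - 1) ^ k * ((n.choose k : ℕ) : Sp p)
      = ((n.choose k : ℕ) : ZMod p) • (sigma p - 1) ^ k := by
    rw [mul_comm, ← map_natCast (algebraMap (ZMod p) (Sp p)), ← Algebra.smul_def]
  rw [h2]
  exact Submodule.smul_mem _ _ (Submodule.subset_span ⟨⟨k, hkp⟩, rfl⟩)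

noncomputable def pbasis : Module.Basis (Fin p) (ZMod p) (Sp p) :=
  basisOfTopLeSpanOfCardEqFinrank (fun j : Fin p => (sigma p - 1) ^ (j : ℕ))
    (span_top p)
    (by
      have b : Module.Basis (Multiplicative (ZMod p)) (ZMod p) (Sp p) := MonoidAlgebra.basis _ _
      rw [Module.finrank_eq_card_basis b]
      simp [ZMod.card])

@[simp] lemma pbasis_apply (j : Fin p) : pbasis p j = (sigma p - 1) ^ (j : ℕ) := by
  simp [pbasis]

lemma t_pow_high {n : ℕ} (hn : p ≤ n) : (sigma p - 1) ^ n = 0 := by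
  obtain ⟨k, rfl⟩ := Nat.exists_eq_add_of_le hn
  rw [pow_add, t_pow_p, zero_mul]

lemma t_top_ne : (sigma p - 1) ^ (p - 1) ≠ 0 := by
  have h2 : 0 < p := (Fact.out : p.Prime).pos
  have := (pbasis p).ne_zero ⟨p - 1, by omega⟩
  simpa using this

lemma ann_t (g : Sp p) (hg : (sigma p - 1) * g = 0) :
    ∃ a : ZMod p, g = a • (sigma p - 1) ^ (p - 1) := by
  classical
  set t := sigma p - 1 with ht
  set a : Fin p → ZMod p := fun j => (pbasis p).repr g j with ha
  have h2 : 2 ≤ p := (Fact.out : p.Prime).two_le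
  have hrep : ∑ j : Fin p, a j • t ^ (j : ℕ) = g := by
    simpa using (pbasis p).sum_repr g
  have key : ∀ m : ℕ, ∀ i : Fin p, (i : ℕ) = m → (i : ℕ) < p - 1 → a i = 0 := by
    intro m
    induction m using Nat.strong_induction_on with
    | _ m IH =>
      intro i him hi
      have hn1 : 1 ≤ p - 1 - (i : ℕ) := by omega
      set n := p - 1 - (i : ℕ) with hn
      have hzero : t ^ n * g = 0 := by
        have hsplit : t ^ n = t ^ (n - 1) * t := by
          rw [← pow_succ]; congr 1; omega
        rw [hsplit, mul_assoc, hg, mul_zero]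
      rw [← hrep, Finset.mul_sum] at hzero
      have hterm : ∀ j : Fin p, j ∈ Finset.univ → j ≠ i →
          t ^ n * (a j • t ^ (j : ℕ)) = 0 := by
        intro j _ hji
        rcases lt_or_gt_of_ne (fun h : (j : ℕ) = (i : ℕ) => hji (Fin.ext h)) with hlt | hgt
        · rw [IH (j : ℕ) (him ▸ hlt) j rfl (by omega), zero_smul, mul_zero]
        · rw [mul_smul_comm, ← pow_add, t_pow_high p (by omega), smul_zero]
      rw [Finset.sum_eq_single_of_mem i (Finset.mem_univ i) hterm] at hzero
      rw [mul_smul_comm, ← pow_add] at hzero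
      have hni : n + (i : ℕ) = p - 1 := by omega
      rw [hni] at hzero
      rcases smul_eq_zero.1 hzero with h | h
      · exact h
      · exact absurd h (t_top_ne p)
  refine ⟨a ⟨p - 1, by omega⟩, ?_⟩
  rw [← hrep]
  have hterm2 : ∀ j : Fin p, j ∈ Finset.univ → j ≠ (⟨p - 1, by omega⟩ : Fin p) →
      a j • t ^ (j : ℕ) = 0 := by
    intro j _ hji
    have hj2 : (j : ℕ) ≠ p - 1 := fun h => hji (Fin.ext (by simp [h]))
    have hj3 : (j : ℕ) < p - 1 := by have := j.isLt; omega
    rw [key (j : ℕ) j rfl hj3, zero_smul]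
  rw [Finset.sum_eq_single_of_mem ⟨p - 1, by omega⟩ (Finset.mem_univ _) hterm2]

section ModuleLemmas

variable {p} {M : Type u} [AddCommGroup M] [Module (Sp p) M]
  [Module (ZMod p) M] [IsScalarTower (ZMod p) (Sp p) M]

lemma smul_comm' [Fact p.Prime] (a : ZMod p) (s : Sp p) (m : M) :
    s • a • m = a • s • m := by
  have h1 : a • m = (a • (1 : Sp p)) • m := by rw [smul_assoc, one_smul]
  rw [h1, ← mul_smul, mul_comm, smul_mul_assoc, one_mul, smul_assoc]

lemma indep_tower {ι : Type u} (v y : ι → M) (hv : LinearIndependent (ZMod p) v)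
    (hy : ∀ i, (sigma p - 1) ^ (p - 1) • y i = v i) :
    LinearIndependent (ZMod p)
      (fun q : ι × Fin p => (sigma p - 1) ^ ((q.2 : ℕ)) • y q.1) := by
  classical
  have h2 : 2 ≤ p := (Fact.out : p.Prime).two_le
  set t : Sp p := sigma p - 1 with ht
  rw [linearIndependent_iff']
  intro s g hrel
  -- key claim by strong induction on j
  have key : ∀ m : ℕ, ∀ q ∈ s, (q.2 : ℕ) = m → g q = 0 := by
    intro m
    induction m using Nat.strong_induction_on with
    | _ m IH =>
      intro q hq hqm
      set j : Fin p := q.2 with hj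
      -- apply t^(p-1-j) to the relation
      have hrel2 : ∑ q' ∈ s, g q' • (t ^ ((p - 1 - (j : ℕ)) + (q'.2 : ℕ)) • y q'.1)
          = 0 := by
        have := congrArg (fun z => t ^ (p - 1 - (j : ℕ)) • z) hrel
        simp only [smul_zero, Finset.smul_sum] at this
        rw [← this]
        apply Finset.sum_congr rfl
        intro q' _
        rw [smul_comm' _ (t ^ (p - 1 - (j : ℕ)))]
        rw [smul_smul, ← pow_add]
      -- terms split
      have hterms : ∀ q' ∈ s, q'.2 ≠ j →
          g q' • (t ^ ((p - 1 - (j : ℕ)) + (q'.2 : ℕ)) • y q'.1) = 0 := by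
        intro q' hq' hne
        rcases lt_or_gt_of_ne (fun h : (q'.2 : ℕ) = (j : ℕ) => hne (Fin.ext h))
          with hlt | hgt
        · rw [IH (q'.2 : ℕ) (by omega) q' hq' rfl, zero_smul]
        · have hgt' : (j : ℕ) < (q'.2 : ℕ) := hgt
          have hjlt : (j : ℕ) < p := j.isLt
          rw [t_pow_high (p := p) (by omega), zero_smul, smul_zero]
      have hsplit : ∑ q' ∈ s, g q' • (t ^ ((p - 1 - (j : ℕ)) + (q'.2 : ℕ)) • y q'.1)
          = ∑ q' ∈ s.filter (fun q' => q'.2 = j),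
              g q' • (t ^ (p - 1) • y q'.1) := by
        rw [← Finset.sum_filter_of_ne (p := fun q' => q'.2 = j)]
        · apply Finset.sum_congr rfl
          intro q' hq'
          have e : q'.2 = j := (Finset.mem_filter.1 hq').2
          have e' : (q'.2 : ℕ) = (j : ℕ) := by rw [e]
          have hjl := j.isLt
          have hexp : p - 1 - (j : ℕ) + (q'.2 : ℕ) = p - 1 := by omega
          rw [hexp]
        · intro q' hq' hne
          by_contra hc
          exact hne (hterms q' hq' hc)
      rw [hsplit] at hrel2
      -- rewrite using v
      have hrel3 : ∑ q' ∈ s.filter (fun q' => q'.2 = j), g q' • v q'.1 = 0 := by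
        rw [← hrel2]
        apply Finset.sum_congr rfl
        intro q' _
        rw [hy]
      -- reindex along Prod.fst
      have hinj : ∀ q1 ∈ s.filter (fun q' => q'.2 = j),
          ∀ q2 ∈ s.filter (fun q' => q'.2 = j), q1.1 = q2.1 → q1 = q2 := by
        intro q1 hq1 q2 hq2 h
        have e1 := (Finset.mem_filter.1 hq1).2
        have e2 := (Finset.mem_filter.1 hq2).2
        exact Prod.ext h (e1.trans e2.symm)
      have himg : ∑ i ∈ (s.filter (fun q' => q'.2 = j)).image Prod.fst,
          (fun i => g (i, j)) i • v i = 0 := by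
        rw [Finset.sum_image hinj] at *
        · rw [← hrel3]
          apply Finset.sum_congr rfl
          intro q' hq'
          have : q'.2 = j := (Finset.mem_filter.1 hq').2
          rw [← this]
      have := linearIndependent_iff'.1 hv _ _ himg q.1
        (Finset.mem_image.2 ⟨q, Finset.mem_filter.2 ⟨hq, rfl⟩, rfl⟩)
      simpa [← hj] using this
  intro q hq
  exact key (q.2 : ℕ) q hq rfl

end ModuleLemmas

section ModuleLemmas2

variable {p : ℕ} [Fact p.Prime] {M : Type*} [AddCommGroup M] [Module (Sp p) M]

/-- In a free `Sp p`-module, anything killed by `t = σ - 1` lies in `t • N`. -/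
lemma t_ann_struct {κ : Type*} (B : Module.Basis κ (Sp p) M) (x : M)
    (hx : (sigma p - 1) • x = 0) : ∃ u : M, x = (sigma p - 1) • u := by
  classical
  set t : Sp p := sigma p - 1 with ht
  have h2 : 2 ≤ p := (Fact.out : p.Prime).two_le
  set l := B.repr x with hl
  have hlz : ∀ k, t * l k = 0 := by
    intro k
    have : B.repr (t • x) = t • B.repr x := map_smul _ _ _
    rw [hx, map_zero] at this
    have := congrArg (fun f => f k) this.symm
    simpa [Finsupp.smul_apply, smul_eq_mul] using this
  have hch : ∀ k, ∃ a : ZMod p, l k = a • t ^ (p - 1) := fun k => ann_t p (l k) (hlz k)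
  choose w hw using hch
  refine ⟨∑ k ∈ l.support, (w k • t ^ (p - 2)) • B k, ?_⟩
  rw [Finset.smul_sum]
  have hx2 : x = ∑ k ∈ l.support, l k • B k := by
    conv_lhs => rw [← B.linearCombination_repr x]
    rw [Finsupp.linearCombination_apply, Finsupp.sum]
  rw [hx2]
  apply Finset.sum_congr rfl
  intro k _
  rw [smul_smul, hw k, mul_smul_comm, ← pow_succ']
  have : p - 2 + 1 = p - 1 := by omega
  rw [this]

end ModuleLemmas2

section ModuleLemmas3

variable {p : ℕ} [Fact p.Prime] {M : Type u} [AddCommGroup M] [Module (Sp p) M]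
  [Module (ZMod p) M] [IsScalarTower (ZMod p) (Sp p) M]

lemma y_indep_R {ι : Type u} (v y : ι → M) (hv : LinearIndependent (ZMod p) v)
    (hy : ∀ i, (sigma p - 1) ^ (p - 1) • y i = v i) :
    LinearIndependent (Sp p) y := by
  classical
  have hpair := indep_tower v y hv hy
  rw [linearIndependent_iff']
  intro s f hrel i hi
  set t : Sp p := sigma p - 1 with ht
  have hrel2 : ∑ q ∈ s ×ˢ (Finset.univ : Finset (Fin p)),
      ((pbasis p).repr (f q.1) q.2) • ((sigma p - 1) ^ ((q.2 : ℕ)) • y q.1) = 0 := by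
    rw [Finset.sum_product]
    rw [← hrel]
    apply Finset.sum_congr rfl
    intro i' _
    have hexp : f i' = ∑ j : Fin p, ((pbasis p).repr (f i') j) • (sigma p - 1) ^ (j : ℕ) := by
      simpa using ((pbasis p).sum_repr (f i')).symm
    conv_rhs => rw [hexp]
    rw [Finset.sum_smul]
    apply Finset.sum_congr rfl
    intro j _
    rw [smul_assoc]
  have hall := linearIndependent_iff'.1 hpair _ _ hrel2
  have hrep : (pbasis p).repr (f i) = 0 := by
    ext j
    simpa using hall (i, j) (Finset.mem_product.2 ⟨hi, Finset.mem_univ j⟩)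
  have := (pbasis p).repr.map_eq_zero_iff.1 hrep
  exact this

end ModuleLemmas3


/-- Abstract structure theorem (Theorem 2): with `c = cor` surjective,
`r = res`, `r∘c = (σ-1)^(p-1)`, `ker c = (σ-1)M`, and a trivial submodule `X`
mapped isomorphically by `c` onto `ker r`, one has `M = X ⊕ Y` with `Y` a
maximal free `𝔽_p[H]`-submodule, `dim X = dim ker r`, and
`rank Y = dim (A / ker r)`. -/
theorem stmt15 (p : ℕ) [Fact p.Prime]
    (M A : Type u) [AddCommGroup M] [Module (Sp p) M]
    [Module (ZMod p) M] [IsScalarTower (ZMod p) (Sp p) M]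
    [AddCommGroup A] [Module (ZMod p) A]
    (c : M →ₗ[ZMod p] A) (r : A →ₗ[ZMod p] M)
    (hrc : ∀ m : M, r (c m) = (sigma p - 1) ^ (p - 1) • m)
    (hsurj : Function.Surjective c)
    (hker : LinearMap.ker c = LinearMap.range (smulMap p M (sigma p - 1)))
    (hcomm : ∀ m : M, c (sigma p • m) = c m)
    (X : Submodule (Sp p) M) (hXtriv : ∀ x ∈ X, sigma p • x = x)
    (hXiso : Set.BijOn c X (LinearMap.ker r)) :
    ∃ Y : Submodule (Sp p) M, Module.Free (Sp p) Y ∧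
      (∀ Z : Submodule (Sp p) M, Module.Free (Sp p) Z → Y ≤ Z → Y = Z) ∧
      IsCompl X Y ∧
      Module.rank (ZMod p) X = Module.rank (ZMod p) (LinearMap.ker r) ∧
      Module.rank (Sp p) Y = Module.rank (ZMod p) (A ⧸ LinearMap.ker r) := by
  classical
  have hp : p.Prime := Fact.out
  have h2 : 2 ≤ p := hp.two_le
  set t : Sp p := sigma p - 1 with ht
  have htp : t ^ p = 0 := t_pow_p p
  -- basic facts
  have hkerc : ∀ m : M, c m = 0 ↔ ∃ m', t • m' = m := by
    intro m
    constructor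
    · intro h
      have hm : m ∈ LinearMap.ker c := h
      rw [hker] at hm
      obtain ⟨m', hm'⟩ := hm
      exact ⟨m', hm'⟩
    · rintro ⟨m', rfl⟩
      have : t • m' ∈ LinearMap.range (smulMap p M t) := ⟨m', rfl⟩
      rw [← hker] at this
      exact this
  have htX : ∀ x ∈ X, t • x = 0 := by
    intro x hx
    rw [ht, sub_smul, one_smul, hXtriv x hx, sub_self]
  have hbot : ∀ m : M, (t ^ (p - 1) • m = 0 ↔ c m ∈ LinearMap.ker r) := by
    intro m
    rw [LinearMap.mem_ker, hrc m]
  have hdecomp : ∀ m : M, t ^ (p - 1) • m = 0 → ∃ x ∈ X, ∃ m', m = x + t • m' := by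
    intro m hm
    have h1 : c m ∈ (LinearMap.ker r : Set A) := (hbot m).1 hm
    obtain ⟨x, hxX, hcx⟩ := hXiso.surjOn h1
    have hc0 : c (m - x) = 0 := by rw [map_sub, hcx, sub_self]
    obtain ⟨m', hm'⟩ := (hkerc _).1 hc0
    exact ⟨x, hxX, m', by rw [hm']; abel⟩
  -- the image submodule T = range r = t^(p-1) M
  set T : Submodule (ZMod p) M := LinearMap.range r with hTdef
  have hT : ∀ u : M, u ∈ T ↔ ∃ m : M, t ^ (p - 1) • m = u := by
    intro u
    constructor
    · rintro ⟨a, rfl⟩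
      obtain ⟨m, rfl⟩ := hsurj a
      exact ⟨m, (hrc m).symm⟩
    · rintro ⟨m, rfl⟩
      exact ⟨c m, hrc m⟩
  -- basis of T and lifts
  set bT := Module.Basis.ofVectorSpace (ZMod p) T with hbT
  set ι := Module.Basis.ofVectorSpaceIndex (ZMod p) T with hι
  set v : ι → M := fun i => ((bT i : T) : M) with hv
  have hvmem : ∀ i, v i ∈ T := fun i => (bT i).2
  have hvind : LinearIndependent (ZMod p) v :=
    bT.linearIndependent.map' T.subtype (Submodule.ker_subtype T)
  choose y hy using fun i => (hT (v i)).1 (hvmem i)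
  have hyind : LinearIndependent (Sp p) y := y_indep_R v y hvind hy
  set Y : Submodule (Sp p) M := Submodule.span (Sp p) (Set.range y) with hY
  set BY : Module.Basis ι (Sp p) Y := Module.Basis.span hyind with hBY
  have hfree : Module.Free (Sp p) Y := Module.Free.of_basis BY
  -- the span property
  have hsp : ∀ m : M, ∃ z ∈ Y, t ^ (p - 1) • z = t ^ (p - 1) • m := by
    intro m
    have hmem : t ^ (p - 1) • m ∈ T := (hT _).2 ⟨m, rfl⟩
    set u : T := ⟨t ^ (p - 1) • m, hmem⟩ with hu
    set l := bT.repr u with hl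
    have hu0 : u = ∑ i ∈ l.support, l i • bT i := by
      conv_lhs => rw [← bT.linearCombination_repr u]
      rw [Finsupp.linearCombination_apply, Finsupp.sum]
    have hu1 : t ^ (p - 1) • m = ∑ i ∈ l.support, l i • v i := by
      have := congrArg (T.subtype) hu0
      simpa [map_sum, hv] using this
    refine ⟨∑ i ∈ l.support, (l i • (1 : Sp p)) • y i, ?_, ?_⟩
    · exact Submodule.sum_mem _ fun i _ =>
        Submodule.smul_mem _ _ (Submodule.subset_span ⟨i, rfl⟩)
    · rw [Finset.smul_sum, hu1]
      apply Finset.sum_congr rfl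
      intro i _
      rw [smul_smul, mul_comm, mul_smul, hy i, smul_assoc, one_smul]
  -- every t-multiple is in Y
  have hTY : ∀ m : M, t • m ∈ Y := by
    have main : ∀ d : ℕ, ∀ m : M, 1 ≤ p - d → t ^ (p - d) • m ∈ Y := by
      intro d
      induction d with
      | zero =>
        intro m _
        simp only [Nat.sub_zero, htp, zero_smul]
        exact Y.zero_mem
      | succ d IHd =>
        intro m hd1
        obtain ⟨z, hzY, hz⟩ := hsp m
        have h0 : t ^ (p - 1) • (m - z) = 0 := by rw [smul_sub, hz, sub_self]
        obtain ⟨x, hxX, m', hm'⟩ := hdecomp (m - z) h0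
        have hm2 : m = z + (x + t • m') := by rw [← hm']; abel
        rw [hm2, smul_add, smul_add]
        refine add_mem (Submodule.smul_mem _ _ hzY) (add_mem ?_ ?_)
        · have hx0 : t ^ (p - (d + 1)) • x = 0 := by
            have hsplit : t ^ (p - (d + 1)) = t ^ (p - (d + 1) - 1) * t := by
              rw [← pow_succ]; congr 1; omega
            rw [hsplit, mul_smul, htX x hxX, smul_zero]
          rw [hx0]; exact Y.zero_mem
        · rw [smul_smul, ← pow_succ]
          have he : p - (d + 1) + 1 = p - d := by omega
          rw [he]
          exact IHd m' (by omega)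
    intro m
    have h1 := main (p - 1) m (by omega)
    have he : p - (p - 1) = 1 := by omega
    rwa [he, pow_one] at h1
  -- codisjointness
  have hcod : ∀ m : M, m ∈ X ⊔ Y := by
    intro m
    obtain ⟨z, hzY, hz⟩ := hsp m
    have h0 : t ^ (p - 1) • (m - z) = 0 := by rw [smul_sub, hz, sub_self]
    obtain ⟨x, hxX, m', hm'⟩ := hdecomp (m - z) h0
    have hm2 : m = x + (z + t • m') := by
      calc m = (m - z) + z := by abel
        _ = (x + t • m') + z := by rw [hm']
        _ = x + (z + t • m') := by abel
    exact Submodule.mem_sup.2 ⟨x, hxX, z + t • m',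
      add_mem hzY (hTY m'), hm2.symm⟩
  -- elements of X killed by c are zero
  have hX0 : ∀ x ∈ X, c x = 0 → x = 0 := by
    intro x hx hcx
    have := hXiso.injOn hx X.zero_mem (by rw [hcx, map_zero])
    exact this
  -- disjointness
  have hdisj : ∀ m : M, m ∈ X → m ∈ Y → m = 0 := by
    intro m hmX hmY
    have hblah : t • (⟨m, hmY⟩ : Y) = 0 := by
      apply Subtype.ext
      have : (↑(t • (⟨m, hmY⟩ : Y)) : M) = t • m := rfl
      rw [this, htX m hmX]
      rfl
    obtain ⟨u, hu⟩ := t_ann_struct BY _ hblah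
    have hmu : m = t • (u : M) := by
      have := congrArg (Y.subtype) hu
      simpa using this
    have hc0 : c m = 0 := (hkerc m).2 ⟨(u : M), hmu.symm⟩
    exact hX0 m hmX hc0
  have hcompl : IsCompl X Y := by
    constructor
    · rw [Submodule.disjoint_def]
      exact fun m hmX hmY => hdisj m hmX hmY
    · rw [codisjoint_iff, eq_top_iff]
      exact fun m _ => hcod m
  refine ⟨Y, hfree, ?_, hcompl, ?_, ?_⟩
  · -- maximality
    intro Z hZfree hYZ
    refine le_antisymm hYZ ?_
    intro z hz
    obtain ⟨x, hxX, w, hwY, hzw⟩ := Submodule.mem_sup.1 (hcod z)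
    have hxZ : x ∈ Z := by
      have : x = z - w := by rw [← hzw]; abel
      rw [this]
      exact sub_mem hz (hYZ hwY)
    have hx0 : x = 0 := by
      set BZ := Module.Free.chooseBasis (Sp p) Z with hBZ
      have hblah : t • (⟨x, hxZ⟩ : Z) = 0 := by
        apply Subtype.ext
        have : (↑(t • (⟨x, hxZ⟩ : Z)) : M) = t • x := rfl
        rw [this, htX x hxX]
        rfl
      obtain ⟨u, hu⟩ := t_ann_struct BZ _ hblah
      have hmu : x = t • (u : M) := by
        have := congrArg (Z.subtype) hu
        simpa using this
      exact hX0 x hxX ((hkerc x).2 ⟨(u : M), hmu.symm⟩)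
    rw [← hzw, hx0, zero_add]
    exact hwY
  · -- rank X = rank ker r
    have hmapsTo := hXiso.mapsTo
    let cX : X →ₗ[ZMod p] LinearMap.ker r :=
      { toFun := fun x => ⟨c x, hmapsTo x.2⟩
        map_add' := by intro a b; ext; simp
        map_smul' := by intro a b; ext; simp }
    have hbij : Function.Bijective cX := by
      constructor
      · intro x₁ x₂ h
        exact Subtype.ext (hXiso.injOn x₁.2 x₂.2 (congrArg Subtype.val h))
      · rintro ⟨w, hw⟩
        obtain ⟨x, hxX, hcx⟩ := hXiso.surjOn hw
        exact ⟨⟨x, hxX⟩, Subtype.ext hcx⟩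
    exact (LinearEquiv.ofBijective cX hbij).rank_eq
  · -- rank Y = rank A/ker r
    have h1 : Module.rank (Sp p) Y = Cardinal.mk ι := BY.mk_eq_rank''.symm
    have h2 : (Cardinal.mk ι : Cardinal) = Module.rank (ZMod p) T := bT.mk_eq_rank''
    have h3 : Module.rank (ZMod p) (A ⧸ LinearMap.ker r) = Module.rank (ZMod p) T :=
      (LinearMap.quotKerEquivRange r).rank_eq
    rw [h1, h2, h3]
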